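/- Fix n ≥ 1. For j ∈ Fin n, define Pauli letter assignments a_j, b_j : Fin n → {I,X,Y,Z} by a_j(t) = Z for t < j, a_j(j) = X, a_j(t) = I for t > j, and b_j(t) = Z for t < j, b_j(j) = Y, b_j(t) = I for t > j. Define the Jordan–Wigner Majorana operators γ : Fin (2n) → (2^n × 2^n complex matrices) by γ_{2j} = M_{a_j} and γ_{2j+1} = M_{b_j}. Then for all μ, ν ∈ Fin (2n): γ_μ · γ_ν + γ_ν · γ_μ = 2·δ_{μν} · 1, where δ is the Kronecker delta and 1 is the 2^n × 2^n identity matrix. (The Jordan–Wigner strings satisfy the canonical anticommutation relations of Majorana fermions.) -/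

import Mathlib

open Matrix

open Finset

/-- The four Pauli letters `I, X, Y, Z`. -/
inductive PauliLetter : Type
  | I | X | Y | Z
  deriving DecidableEq

instance PauliLetter.instFintype : Fintype PauliLetter :=
  ⟨{PauliLetter.I, PauliLetter.X, PauliLetter.Y, PauliLetter.Z}, by intro x; cases x <;> simp⟩

/-- The 2×2 complex matrix associated to a Pauli letter. -/
def PauliLetter.toMatrix : PauliLetter → Matrix (Fin 2) (Fin 2) ℂ
  | .I => !![1, 0; 0, 1]
  | .X => !![0, 1; 1, 0]
  | .Y => !![0, -Complex.I; Complex.I, 0]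
  | .Z => !![1, 0; 0, -1]

/-- The Pauli string associated to a Pauli letter assignment `f : Fin n → PauliLetter`,
given entrywise as the `n`-fold Kronecker product of the single-site matrices. -/
def pauliString {n : ℕ} (f : Fin n → PauliLetter) :
    Matrix (Fin n → Fin 2) (Fin n → Fin 2) ℂ :=
  Matrix.of fun x y => ∏ t, (f t).toMatrix (x t) (y t)

/-- The Jordan–Wigner assignment `a_j`: `Z` on sites `t < j`, `X` at `j`, `I` afterwards. -/
def jwA (n : ℕ) (j : Fin n) : Fin n → PauliLetter := fun t =>
  if t < j then PauliLetter.Z else if t = j then PauliLetter.X else PauliLetter.I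

/-- The Jordan–Wigner assignment `b_j`: `Z` on sites `t < j`, `Y` at `j`, `I` afterwards. -/
def jwB (n : ℕ) (j : Fin n) : Fin n → PauliLetter := fun t =>
  if t < j then PauliLetter.Z else if t = j then PauliLetter.Y else PauliLetter.I

/-- The Jordan–Wigner Majorana operators: `γ_{2j} = M_{a_j}` and `γ_{2j+1} = M_{b_j}`. -/
def majorana (n : ℕ) (μ : Fin (2 * n)) :
    Matrix (Fin n → Fin 2) (Fin n → Fin 2) ℂ :=
  if μ.val % 2 = 0 then
    pauliString (jwA n ⟨μ.val / 2, by have := μ.isLt; omega⟩)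
  else
    pauliString (jwB n ⟨μ.val / 2, by have := μ.isLt; omega⟩)

/-! ### Auxiliary machinery -/

/-- The sign picked up when swapping two Pauli letters: `-1` iff they are distinct non-identity
letters. -/
def pauliEps (p q : PauliLetter) : ℂ :=
  if p = q ∨ p = .I ∨ q = .I then 1 else -1

lemma PauliLetter.toMatrix_mul_self (p : PauliLetter) : p.toMatrix * p.toMatrix = 1 := by
  cases p <;> ext i j <;> fin_cases i <;> fin_cases j <;>
    simp [PauliLetter.toMatrix, Matrix.mul_apply, Fin.sum_univ_two, Matrix.one_apply]

lemma pauliEps_mul (p q : PauliLetter) :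
    q.toMatrix * p.toMatrix = pauliEps p q • (p.toMatrix * q.toMatrix) := by
  cases p <;> cases q <;> ext i j <;> fin_cases i <;> fin_cases j <;>
    simp [PauliLetter.toMatrix, pauliEps, Matrix.mul_apply, Fin.sum_univ_two]

/-- Pauli strings multiply sitewise. -/
lemma pauliString_mul {n : ℕ} (f g : Fin n → PauliLetter) :
    pauliString f * pauliString g =
      Matrix.of fun x y => ∏ t, ((f t).toMatrix * (g t).toMatrix) (x t) (y t) := by
  ext x y
  simp only [Matrix.mul_apply, pauliString, Matrix.of_apply, ← Finset.prod_mul_distrib]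
  rw [Finset.prod_univ_sum, ← Fintype.piFinset_univ]

lemma prod_one_entry {n : ℕ} (x y : Fin n → Fin 2) :
    (∏ t, (1 : Matrix (Fin 2) (Fin 2) ℂ) (x t) (y t)) =
      (1 : Matrix (Fin n → Fin 2) (Fin n → Fin 2) ℂ) x y := by
  by_cases h : x = y
  · subst h
    simp [Matrix.one_apply]
  · obtain ⟨t, ht⟩ := Function.ne_iff.mp h
    rw [Matrix.one_apply_ne h, Finset.prod_eq_zero (Finset.mem_univ t)]
    rw [Matrix.one_apply_ne ht]

/-- Every Pauli string squares to the identity. -/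
lemma pauliString_mul_self {n : ℕ} (f : Fin n → PauliLetter) :
    pauliString f * pauliString f = 1 := by
  rw [pauliString_mul]
  ext x y
  simp only [Matrix.of_apply]
  simp only [PauliLetter.toMatrix_mul_self]
  exact prod_one_entry x y

/-- The common shape of the Jordan–Wigner assignments. -/
def jwLetter {n : ℕ} (c : PauliLetter) (j : Fin n) : Fin n → PauliLetter := fun t =>
  if t < j then .Z else if t = j then c else .I

lemma majorana_eq (n : ℕ) (μ : Fin (2 * n)) :
    majorana n μ =
      pauliString (jwLetter (if μ.val % 2 = 0 then .X else .Y)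
        ⟨μ.val / 2, by have := μ.isLt; omega⟩) := by
  unfold majorana
  split_ifs <;> rfl

lemma pauliEps_jwLetter {n : ℕ} {c d : PauliLetter} (hc : c = .X ∨ c = .Y)
    (hd : d = .X ∨ d = .Y) {j k : Fin n} (h : ¬(c = d ∧ j = k)) (t : Fin n) :
    pauliEps (jwLetter c j t) (jwLetter d k t) = if t = min j k then -1 else 1 := by
  unfold jwLetter
  rcases lt_trichotomy j k with hjk | rfl | hjk
  · rw [min_eq_left hjk.le]
    rcases lt_trichotomy t j with ht | rfl | ht
    · rw [if_pos ht, if_pos (ht.trans hjk), if_neg ht.ne]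
      simp [pauliEps]
    · rw [if_neg (lt_irrefl _), if_pos rfl, if_pos hjk]
      rcases hc with rfl | rfl <;> simp [pauliEps]
    · rw [if_neg (not_lt_of_gt ht), if_neg ht.ne', if_neg ht.ne']
      simp [pauliEps]
  · have hcd : c ≠ d := fun e => h ⟨e, rfl⟩
    rw [min_self]
    rcases lt_trichotomy t j with ht | rfl | ht
    · rw [if_pos ht, if_pos ht, if_neg ht.ne]
      simp [pauliEps]
    · rw [if_neg (lt_irrefl _), if_pos rfl, if_pos rfl]
      rcases hc with rfl | rfl <;> rcases hd with rfl | rfl <;> simp_all [pauliEps]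
    · rw [if_neg (not_lt_of_gt ht), if_neg ht.ne', if_neg ht.ne']
      simp [pauliEps, ht.ne']
  · rw [min_eq_right hjk.le]
    rcases lt_trichotomy t k with ht | rfl | ht
    · rw [if_pos ht, if_pos (ht.trans hjk), if_neg ht.ne]
      simp [pauliEps]
    · rw [if_neg (lt_irrefl _), if_pos rfl, if_pos hjk]
      rcases hd with rfl | rfl <;> simp [pauliEps]
    · rw [if_neg (not_lt_of_gt ht), if_neg ht.ne']
      simp [pauliEps, ht.ne']

/-- Distinct Jordan–Wigner strings anticommute. -/
lemma jw_anticomm {n : ℕ} {c d : PauliLetter} (hc : c = .X ∨ c = .Y)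
    (hd : d = .X ∨ d = .Y) {j k : Fin n} (h : ¬(c = d ∧ j = k)) :
    pauliString (jwLetter d k) * pauliString (jwLetter c j) =
      -(pauliString (jwLetter c j) * pauliString (jwLetter d k)) := by
  rw [pauliString_mul, pauliString_mul]
  ext x y
  simp only [Matrix.of_apply, Matrix.neg_apply]
  calc (∏ t, ((jwLetter d k t).toMatrix * (jwLetter c j t).toMatrix) (x t) (y t))
      = ∏ t, (pauliEps (jwLetter c j t) (jwLetter d k t) •
          ((jwLetter c j t).toMatrix * (jwLetter d k t).toMatrix)) (x t) (y t) := by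
        simp only [← pauliEps_mul]
    _ = (∏ t, pauliEps (jwLetter c j t) (jwLetter d k t)) *
          ∏ t, ((jwLetter c j t).toMatrix * (jwLetter d k t).toMatrix) (x t) (y t) := by
        simp only [Matrix.smul_apply, smul_eq_mul, Finset.prod_mul_distrib]
    _ = -∏ t, ((jwLetter c j t).toMatrix * (jwLetter d k t).toMatrix) (x t) (y t) := by
        rw [show (∏ t, pauliEps (jwLetter c j t) (jwLetter d k t)) = -1 from ?_]
        · ring
        · rw [Finset.prod_congr rfl fun t _ => pauliEps_jwLetter hc hd h t]
          simp [Finset.prod_ite_eq']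

/-- The Jordan–Wigner strings satisfy the canonical anticommutation relations of Majorana
fermions: `γ_μ γ_ν + γ_ν γ_μ = 2 δ_{μν} 1`. -/
theorem majorana_anticommutation (n : ℕ) (hn : 1 ≤ n) (μ ν : Fin (2 * n)) :
    majorana n μ * majorana n ν + majorana n ν * majorana n μ =
      (if μ = ν then (2 : ℂ) else 0) •
        (1 : Matrix (Fin n → Fin 2) (Fin n → Fin 2) ℂ) := by
  by_cases hμν : μ = ν
  · subst hμν
    rw [if_pos rfl, majorana_eq, pauliString_mul_self]
    rw [two_smul]
  · rw [if_neg hμν, zero_smul, majorana_eq, majorana_eq]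
    set c : PauliLetter := if μ.val % 2 = 0 then .X else .Y with hc
    set d : PauliLetter := if ν.val % 2 = 0 then .X else .Y with hd
    have hc' : c = .X ∨ c = .Y := by rw [hc]; split_ifs <;> simp
    have hd' : d = .X ∨ d = .Y := by rw [hd]; split_ifs <;> simp
    have h : ¬(c = d ∧ (⟨μ.val / 2, by have := μ.isLt; omega⟩ : Fin n) =
        ⟨ν.val / 2, by have := ν.isLt; omega⟩) := by
      rintro ⟨h1, h2⟩
      apply hμν
      have h2' : μ.val / 2 = ν.val / 2 := by simpa using h2
      have hpar : μ.val % 2 = ν.val % 2 := by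
        rw [hc, hd] at h1
        by_cases e1 : μ.val % 2 = 0 <;> by_cases e2 : ν.val % 2 = 0 <;>
          simp [e1, e2] at h1 ⊢ <;> omega
      exact Fin.ext (by omega)
    rw [jw_anticomm hc' hd' h, add_neg_cancel]
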